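/- If A is an operator on H₁ ⊗ H₂ such that Tr(A (P ⊗ Q)) ≥ 0 (i.e., is real and nonnegative) for all orthogonal projections P on H₁ and Q on H₂, then A is Hermitian. -/
import Mathlib


open Matrix
open scoped Kronecker ComplexOrder

/-- A quantum state: positive semidefinite operator of trace one. -/
def IsState {ι : Type*} [Fintype ι] [DecidableEq ι] (A : Matrix ι ι ℂ) : Prop :=
  A.PosSemidef ∧ A.trace = 1

/-- Finite convex combinations of product states on `C^m ⊗ C^n`. -/
def SepCombos (m n : ℕ) : Set (Matrix (Fin m × Fin n) (Fin m × Fin n) ℂ) :=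
  {ρ | ∃ (k : ℕ) (p : Fin k → ℝ) (σ : Fin k → Matrix (Fin m) (Fin m) ℂ)
      (τ : Fin k → Matrix (Fin n) (Fin n) ℂ),
      (∀ i, 0 ≤ p i) ∧ (∑ i, p i) = 1 ∧ (∀ i, IsState (σ i)) ∧ (∀ i, IsState (τ i)) ∧
      ρ = ∑ i, (p i : ℂ) • (σ i ⊗ₖ τ i)}

/-- A separable state: a state in the closure of convex combinations of product states. -/
def SepState {m n : ℕ} (ρ : Matrix (Fin m × Fin n) (Fin m × Fin n) ℂ) : Prop :=
  IsState ρ ∧ ρ ∈ closure (SepCombos m n)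

/-- A positive map: maps positive semidefinite matrices to positive semidefinite ones. -/
def IsPositiveMap {n k : ℕ}
    (Λ : Matrix (Fin n) (Fin n) ℂ →ₗ[ℂ] Matrix (Fin k) (Fin k) ℂ) : Prop :=
  ∀ A, A.PosSemidef → (Λ A).PosSemidef

/-- The map `I ⊗ Λ` acting on operators on `C^m ⊗ C^n`. -/
def idOtimes {m n k : ℕ}
    (Λ : Matrix (Fin n) (Fin n) ℂ →ₗ[ℂ] Matrix (Fin k) (Fin k) ℂ)
    (ρ : Matrix (Fin m × Fin n) (Fin m × Fin n) ℂ) :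
    Matrix (Fin m × Fin k) (Fin m × Fin k) ℂ :=
  fun p q => Λ (fun μ ν => ρ (p.1, μ) (q.1, ν)) p.2 q.2

/-- The map `Λ ⊗ I_k`. -/
def otimesId {n m : ℕ}
    (Λ : Matrix (Fin n) (Fin n) ℂ →ₗ[ℂ] Matrix (Fin m) (Fin m) ℂ) (k : ℕ)
    (A : Matrix (Fin n × Fin k) (Fin n × Fin k) ℂ) :
    Matrix (Fin m × Fin k) (Fin m × Fin k) ℂ :=
  fun p q => Λ (fun i j => A (i, p.2) (j, q.2)) p.1 q.1

/-- Complete positivity. -/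
def IsCompletelyPositive {n m : ℕ}
    (Λ : Matrix (Fin n) (Fin n) ℂ →ₗ[ℂ] Matrix (Fin m) (Fin m) ℂ) : Prop :=
  ∀ k : ℕ, ∀ A : Matrix (Fin n × Fin k) (Fin n × Fin k) ℂ,
    A.PosSemidef → (otimesId Λ k A).PosSemidef

/-- Partial transposition with respect to the second factor. -/
def ptranspose {α β : Type*} (ρ : Matrix (α × β) (α × β) ℂ) : Matrix (α × β) (α × β) ℂ :=
  fun p q => ρ (p.1, q.2) (q.1, p.2)

/-- An orthogonal projection matrix. -/
def IsProjMat {ι : Type*} [Fintype ι] (P : Matrix ι ι ℂ) : Prop :=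
  P.IsHermitian ∧ P * P = P

/-- The transpose map as a linear map. -/
def transposeLM (n : ℕ) : Matrix (Fin n) (Fin n) ℂ →ₗ[ℂ] Matrix (Fin n) (Fin n) ℂ where
  toFun := Matrix.transpose
  map_add' := fun _ _ => Matrix.transpose_add _ _
  map_smul' := fun _ _ => Matrix.transpose_smul _ _


lemma single_quad {m : ℕ} (M : Matrix (Fin m) (Fin m) ℂ) (i j : Fin m) :
    star (Pi.single i (1:ℂ)) ⬝ᵥ M *ᵥ Pi.single j 1 = M i j := by
  have h1 : star (Pi.single i (1:ℂ)) = (Pi.single i 1 : Fin m → ℂ) := by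
    ext k; rw [Pi.star_apply, Pi.single_apply]; split <;> simp [Pi.single_apply, *]
  rw [h1]
  simp [Matrix.mulVec_single, single_dotProduct]

lemma quad_zero {m : ℕ} (M : Matrix (Fin m) (Fin m) ℂ)
    (h : ∀ x : Fin m → ℂ, star x ⬝ᵥ M *ᵥ x = 0) : M = 0 := by
  have expand : ∀ (i j : Fin m) (c : ℂ),
      M i i + c * M i j + star c * M j i + star c * c * M j j = 0 := by
    intro i j c
    have := h ((Pi.single i 1 : Fin m → ℂ) + c • (Pi.single j 1 : Fin m → ℂ))
    simp only [star_add, star_smul, Matrix.mulVec_add, Matrix.mulVec_smul,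
      dotProduct_add, add_dotProduct, dotProduct_smul,
      smul_dotProduct, smul_eq_mul, single_quad] at this
    rw [← this]; ring
  have diag : ∀ i, M i i = 0 := by
    intro i
    have := h (Pi.single i 1)
    rwa [single_quad] at this
  ext i j
  have e1 := expand i j 1
  have e2 := expand i j Complex.I
  simp only [diag, star_one, one_mul, Complex.star_def, Complex.conj_I] at e1 e2
  simp only [Matrix.zero_apply]
  have hI := Complex.I_mul_I
  linear_combination (1/2) * e1 + (-Complex.I/2) * e2 + ((M i j - M j i)/2) * hI

lemma star_dot_self {m : ℕ} (v : Fin m → ℂ) : star (star v ⬝ᵥ v) = star v ⬝ᵥ v := by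
  simp [dotProduct, star_sum, mul_comm]

lemma proj_of_ne {m : ℕ} (v : Fin m → ℂ) (hv : v ≠ 0) :
    IsProjMat ((star v ⬝ᵥ v)⁻¹ • Matrix.vecMulVec v (star v)) := by
  have hs : star v ⬝ᵥ v ≠ 0 := by
    rw [Ne, dotProduct_star_self_eq_zero]; exact hv
  have hstar := star_dot_self v
  constructor
  · unfold Matrix.IsHermitian
    rw [Matrix.conjTranspose_smul]
    ext i j
    simp [Matrix.vecMulVec_apply, star_inv₀, hstar, mul_comm]
  · ext i j
    simp only [Matrix.mul_apply, Matrix.smul_apply, Matrix.vecMulVec_apply, smul_eq_mul]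
    have : ∑ k, (star v ⬝ᵥ v)⁻¹ * (v i * star v k) * ((star v ⬝ᵥ v)⁻¹ * (v k * star v j))
        = (star v ⬝ᵥ v)⁻¹ * ((star v ⬝ᵥ v)⁻¹ * (star v ⬝ᵥ v)) * (v i * star v j) := by
      rw [dotProduct, Finset.mul_sum, Finset.mul_sum]
      rw [Finset.sum_mul]
      refine Finset.sum_congr rfl fun k _ => ?_
      simp [Pi.star_apply]; ring
    rw [this, inv_mul_cancel₀ hs]
    ring_nf

lemma trace_formula {m n : ℕ} (A : Matrix (Fin m × Fin n) (Fin m × Fin n) ℂ)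
    (v : Fin m → ℂ) (w : Fin n → ℂ) :
    (A * (Matrix.vecMulVec v (star v) ⊗ₖ Matrix.vecMulVec w (star w))).trace
      = star (fun p : Fin m × Fin n => v p.1 * w p.2) ⬝ᵥ A *ᵥ (fun p => v p.1 * w p.2) := by
  simp only [Matrix.trace, Matrix.diag, Matrix.mul_apply, Matrix.kroneckerMap_apply,
    Matrix.vecMulVec_apply, Pi.star_apply, dotProduct, Matrix.mulVec,
    Finset.mul_sum]
  refine Finset.sum_congr rfl fun p _ => Finset.sum_congr rfl fun q _ => ?_
  simp only [Complex.star_def, _root_.map_mul]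
  ring

lemma conj_quad {ι : Type*} [Fintype ι] (M : Matrix ι ι ℂ) (x : ι → ℂ) :
    star x ⬝ᵥ Mᴴ *ᵥ x = star (star x ⬝ᵥ M *ᵥ x) := by
  simp only [dotProduct, Matrix.mulVec, Matrix.conjTranspose_apply, Pi.star_apply,
    star_sum, star_mul', Finset.mul_sum]
  rw [Finset.sum_comm]
  refine Finset.sum_congr rfl fun p _ => Finset.sum_congr rfl fun q _ => ?_
  simp only [Complex.star_def, Complex.conj_conj]
  ring


/-- if `Tr(A (P ⊗ Q)) ≥ 0` for all projections then `A` is Hermitian. -/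
theorem hermitian_of_nonneg_on_product_projectors {m n : ℕ}
    (A : Matrix (Fin m × Fin n) (Fin m × Fin n) ℂ)
    (h : ∀ (P : Matrix (Fin m) (Fin m) ℂ) (Q : Matrix (Fin n) (Fin n) ℂ),
      IsProjMat P → IsProjMat Q → 0 ≤ (A * (P ⊗ₖ Q)).trace) :
    A.IsHermitian := by
  set B := A - Aᴴ with hB
  -- Step 0: realness of the quadratic form on product vectors
  have real_quad : ∀ (v : Fin m → ℂ) (w : Fin n → ℂ),
      star (star (fun p : Fin m × Fin n => v p.1 * w p.2) ⬝ᵥ A *ᵥ (fun p => v p.1 * w p.2))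
        = star (fun p : Fin m × Fin n => v p.1 * w p.2) ⬝ᵥ A *ᵥ (fun p => v p.1 * w p.2) := by
    intro v w
    by_cases hv : v = 0
    · have hx : (fun p : Fin m × Fin n => v p.1 * w p.2) = 0 := by
        ext p; simp [hv]
      rw [hx]; simp
    by_cases hw : w = 0
    · have hx : (fun p : Fin m × Fin n => v p.1 * w p.2) = 0 := by
        ext p; simp [hw]
      rw [hx]; simp
    have hsv : star v ⬝ᵥ v ≠ 0 := by
      rw [Ne, dotProduct_star_self_eq_zero]; exact hv
    have hsw : star w ⬝ᵥ w ≠ 0 := by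
      rw [Ne, dotProduct_star_self_eq_zero]; exact hw
    have h0 := h _ _ (proj_of_ne v hv) (proj_of_ne w hw)
    have htr : (A * (((star v ⬝ᵥ v)⁻¹ • Matrix.vecMulVec v (star v)) ⊗ₖ
        ((star w ⬝ᵥ w)⁻¹ • Matrix.vecMulVec w (star w)))).trace
        = (star v ⬝ᵥ v)⁻¹ * (star w ⬝ᵥ w)⁻¹ *
          (star (fun p : Fin m × Fin n => v p.1 * w p.2) ⬝ᵥ A *ᵥ (fun p => v p.1 * w p.2)) := by
      rw [Matrix.smul_kronecker, Matrix.kronecker_smul, Matrix.mul_smul, Matrix.mul_smul,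
        Matrix.trace_smul, Matrix.trace_smul, trace_formula]
      simp [smul_eq_mul]; ring
    -- nonneg implies real
    have him : ((A * (((star v ⬝ᵥ v)⁻¹ • Matrix.vecMulVec v (star v)) ⊗ₖ
        ((star w ⬝ᵥ w)⁻¹ • Matrix.vecMulVec w (star w)))).trace).im = 0 := by
      have := (Complex.le_def.mp h0).2
      simpa using this.symm
    have hreal : star ((A * (((star v ⬝ᵥ v)⁻¹ • Matrix.vecMulVec v (star v)) ⊗ₖ
        ((star w ⬝ᵥ w)⁻¹ • Matrix.vecMulVec w (star w)))).trace)
        = (A * (((star v ⬝ᵥ v)⁻¹ • Matrix.vecMulVec v (star v)) ⊗ₖ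
        ((star w ⬝ᵥ w)⁻¹ • Matrix.vecMulVec w (star w)))).trace := by
      rw [Complex.star_def, Complex.conj_eq_iff_im]; exact him
    rw [htr] at hreal
    have hconjv : star ((star v ⬝ᵥ v)⁻¹) = (star v ⬝ᵥ v)⁻¹ := by
      rw [star_inv₀, star_dot_self]
    have hconjw : star ((star w ⬝ᵥ w)⁻¹) = (star w ⬝ᵥ w)⁻¹ := by
      rw [star_inv₀, star_dot_self]
    have := hreal
    rw [star_mul', star_mul', hconjv, hconjw] at this
    have hne : (star v ⬝ᵥ v)⁻¹ * (star w ⬝ᵥ w)⁻¹ ≠ 0 :=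
      mul_ne_zero (inv_ne_zero hsv) (inv_ne_zero hsw)
    exact mul_left_cancel₀ hne this
  -- product quadratic form of B vanishes
  have key : ∀ (v : Fin m → ℂ) (w : Fin n → ℂ),
      star (fun p : Fin m × Fin n => v p.1 * w p.2) ⬝ᵥ B *ᵥ (fun p => v p.1 * w p.2) = 0 := by
    intro v w
    rw [hB, Matrix.sub_mulVec, dotProduct_sub, conj_quad, real_quad, sub_self]
  -- Step 1: fiber over the first factor
  have step1 : ∀ (w : Fin n → ℂ) (a c : Fin m),
      ∑ b, ∑ d, star (w b) * w d * B (a, b) (c, d) = 0 := by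
    intro w a c
    have hM : (fun a c => ∑ b, ∑ d, star (w b) * w d * B (a, b) (c, d)) =
        (0 : Matrix (Fin m) (Fin m) ℂ) := by
      apply quad_zero
      intro v
      have hk := key v w
      rw [← hk]
      simp only [dotProduct, Matrix.mulVec, Pi.star_apply, Fintype.sum_prod_type,
        Finset.mul_sum, Finset.sum_mul]
      refine Finset.sum_congr rfl fun a' _ => ?_
      rw [Finset.sum_comm]
      refine Finset.sum_congr rfl fun b _ => Finset.sum_congr rfl fun c' _ =>
        Finset.sum_congr rfl fun d _ => ?_
      simp only [Complex.star_def, _root_.map_mul]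
      ring
    exact congrFun (congrFun hM a) c
  -- Step 2: B = 0
  have hB0 : B = 0 := by
    ext ⟨a, b⟩ ⟨c, d⟩
    have hN : (fun b d => B (a, b) (c, d)) = (0 : Matrix (Fin n) (Fin n) ℂ) := by
      apply quad_zero
      intro w
      have := step1 w a c
      rw [← this]
      simp only [dotProduct, Matrix.mulVec, Pi.star_apply, Finset.mul_sum]
      exact Finset.sum_congr rfl fun b _ => Finset.sum_congr rfl fun d _ => by ring
    exact congrFun (congrFun hN b) d
  have : A = Aᴴ := by
    have := sub_eq_zero.mp hB0
    exact this
  exact this.symm
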